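/- Let θ_0 ∈ [0, π/2) and let {c_n}_{n∈ℤ} be a complex sequence such that c_n ∈ K(θ_0) and c_n + c_{−n} ∈ K(θ_0) for all n ≥ 1, where K(θ_0) = {z ∈ ℂ : |arg z| ≤ θ_0}. Suppose there exist λ ≥ 2 and a constant C > 0 such that ∑_{k=n}^{2n} |c_k − c_{k+1}| ≤ (C/n)·∑_{k=⌊n/λ⌋}^{⌊λn⌋} |c_k| for all n ≥ 1. If lim_{n→∞} n·c_n = 0 and ∑_{n=1}^∞ |c_n + c_{−n}| < ∞, then the symmetric partial sums S_n(f,x) = ∑_{k=−n}^{n} c_k e^{ikx} converge uniformly on ℝ (so the sum function f is continuous and 2π-periodic, and lim_{n→∞} sup_x |f(x) − S_n(f,x)| = 0). -/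

import Mathlib

open Filter

/-- The `n`-th symmetric partial sum `∑_{k=-n}^{n} c_k e^{ikx}` of a trigonometric series. -/
noncomputable def symPartialSum (c : ℤ → ℂ) (n : ℕ) (x : ℝ) : ℂ :=
  ∑ k ∈ Finset.Icc (-(n : ℤ)) (n : ℤ), c k * Complex.exp ((k : ℂ) * x * Complex.I)

section Aux
open Finset

private lemma aux_cos' (y j : ℝ) :
    2 * Real.sin (y/2) * Real.sin ((j+1) * y)
      = Real.cos ((j + 1/2) * y) - Real.cos ((j + 3/2) * y) := by
  rw [show (j + 1/2) * y = (j+1)*y - y/2 by ring, show (j + 3/2) * y = (j+1)*y + y/2 by ring,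
    Real.cos_sub, Real.cos_add]
  ring

private lemma aux_dirichlet (y : ℝ) (N : ℕ) : ∀ k : ℕ, N ≤ k →
    2 * Real.sin (y/2) * ∑ j ∈ Finset.Ioc N k, Real.sin (j * y)
      = Real.cos (((N:ℝ) + 1/2) * y) - Real.cos (((k:ℝ) + 1/2) * y) := by
  intro k hk
  induction k, hk using Nat.le_induction with
  | base => simp
  | succ k hk ih =>
    rw [Finset.sum_Ioc_succ_top hk, mul_add, ih]
    push_cast
    rw [aux_cos' y (k:ℝ)]
    ring_nf

private lemma aux_dirichlet_bound {y : ℝ} (hy : 0 < Real.sin (y/2)) (N k : ℕ) :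
    |∑ j ∈ Finset.Ioc N k, Real.sin (j * y)| ≤ 1 / Real.sin (y/2) := by
  rcases le_or_gt N k with h | h
  · have hid := aux_dirichlet y N k h
    have h2 : |2 * Real.sin (y/2) * ∑ j ∈ Finset.Ioc N k, Real.sin (j * y)| ≤ 2 := by
      rw [hid]
      calc |Real.cos (((N:ℝ) + 1/2) * y) - Real.cos (((k:ℝ) + 1/2) * y)|
          ≤ |Real.cos (((N:ℝ) + 1/2) * y)| + |Real.cos (((k:ℝ) + 1/2) * y)| := abs_sub _ _
        _ ≤ 1 + 1 := add_le_add (Real.abs_cos_le_one _) (Real.abs_cos_le_one _)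
        _ = 2 := by norm_num
    rw [abs_mul, abs_of_pos (by positivity : (0:ℝ) < 2 * Real.sin (y/2))] at h2
    rw [le_div_iff₀ hy]
    nlinarith [abs_nonneg (∑ j ∈ Finset.Ioc N k, Real.sin (j * y))]
  · rw [Finset.Ioc_eq_empty (by omega)]
    simp
    positivity

private lemma aux_abel (b u : ℕ → ℂ) (N : ℕ) : ∀ m : ℕ, N ≤ m →
    ∑ k ∈ Finset.Ioc N m, b k * u k
      = (∑ k ∈ Finset.Ioc N m, (b k - b (k+1)) * (∑ j ∈ Finset.Ioc N k, u j))
        + b (m+1) * ∑ j ∈ Finset.Ioc N m, u j := by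
  intro m hm
  induction m, hm using Nat.le_induction with
  | base => simp
  | succ m hm ih =>
    rw [Finset.sum_Ioc_succ_top hm, Finset.sum_Ioc_succ_top hm, Finset.sum_Ioc_succ_top hm, ih]
    ring

private lemma aux_block (c : ℤ → ℂ) (lam C : ℝ) (hlam : 2 ≤ lam) (hC : 0 < C)
    (hMVBV : ∀ n : ℕ, 1 ≤ n →
      ∑ k ∈ Finset.Icc n (2 * n), norm (c k - c (k + 1)) ≤
        (C / n) * ∑ k ∈ Finset.Icc ⌊(n : ℝ) / lam⌋₊ ⌊lam * n⌋₊, norm (c k))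
    (N₀ : ℕ) (hN₀2 : 2 ≤ N₀) (δ : ℝ) (hδ : 0 < δ)
    (hN₀ : ∀ k : ℕ, N₀ ≤ k → (k:ℝ) * norm (c k) ≤ δ)
    (n : ℕ) (hn : N₀ ≤ ⌊(n:ℝ)/lam⌋₊) :
    ∑ k ∈ Finset.Icc n (2*n), norm (c k - c (k + 1)) ≤ 4*C*lam^2*δ/n := by
  have hlam0 : (0:ℝ) < lam := by linarith
  have hF2 : 2 ≤ ⌊(n:ℝ)/lam⌋₊ := le_trans hN₀2 hn
  have hFle : ((⌊(n:ℝ)/lam⌋₊ : ℝ)) ≤ (n:ℝ)/lam := Nat.floor_le (by positivity)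
  have hfl2 : (2:ℝ) ≤ (n:ℝ)/lam := le_trans (by exact_mod_cast hF2) hFle
  have hn2lam : 2*lam ≤ (n:ℝ) := by
    have := (le_div_iff₀ hlam0).1 hfl2; linarith
  have hn4 : (4:ℝ) ≤ (n:ℝ) := by linarith
  have hn1 : 1 ≤ n := by exact_mod_cast le_trans (by norm_num : (1:ℝ) ≤ 4) hn4
  have hnpos : (0:ℝ) < n := by positivity
  have hFgt : (n:ℝ)/lam - 1 < ⌊(n:ℝ)/lam⌋₊ := by
    have := Nat.lt_floor_add_one ((n:ℝ)/lam); linarith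
  have hFge : (n:ℝ)/(2*lam) ≤ ⌊(n:ℝ)/lam⌋₊ := by
    have h1 : (n:ℝ)/(2*lam) = ((n:ℝ)/lam)/2 := by
      rw [div_div]; ring_nf
    rw [h1]; linarith
  have hFpos : (0:ℝ) < ⌊(n:ℝ)/lam⌋₊ := lt_of_lt_of_le (by positivity) hFge
  -- bound the coefficient sum
  have hT : ∑ k ∈ Finset.Icc ⌊(n:ℝ)/lam⌋₊ ⌊lam * n⌋₊, norm (c k)
      ≤ (2*lam*(n:ℝ)) * (2*lam*δ/(n:ℝ)) := by
    have hterm : ∀ k ∈ Finset.Icc ⌊(n:ℝ)/lam⌋₊ ⌊lam * n⌋₊,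
        norm (c k) ≤ 2*lam*δ/(n:ℝ) := by
      intro k hk
      rw [Finset.mem_Icc] at hk
      have hkF : ⌊(n:ℝ)/lam⌋₊ ≤ k := hk.1
      have hkpos : (0:ℝ) < k := lt_of_lt_of_le hFpos (by exact_mod_cast hkF)
      have h1 : norm (c k) ≤ δ / k := by
        rw [le_div_iff₀ hkpos, mul_comm]; exact hN₀ k (le_trans hn hkF)
      have h2 : δ / (k:ℝ) ≤ δ / ((n:ℝ)/(2*lam)) := by
        apply div_le_div_of_nonneg_left hδ.le (by positivity)
        exact le_trans hFge (by exact_mod_cast hkF)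
      have h3 : δ / ((n:ℝ)/(2*lam)) = 2*lam*δ/(n:ℝ) := by field_simp
      linarith
    calc ∑ k ∈ Finset.Icc ⌊(n:ℝ)/lam⌋₊ ⌊lam * n⌋₊, norm (c k)
        ≤ (Finset.Icc ⌊(n:ℝ)/lam⌋₊ ⌊lam * n⌋₊).card • (2*lam*δ/(n:ℝ)) :=
          Finset.sum_le_card_nsmul _ _ _ hterm
      _ = ((Finset.Icc ⌊(n:ℝ)/lam⌋₊ ⌊lam * n⌋₊).card : ℝ) * (2*lam*δ/(n:ℝ)) := by
          rw [nsmul_eq_mul]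
      _ ≤ (2*lam*(n:ℝ)) * (2*lam*δ/(n:ℝ)) := by
          apply mul_le_mul_of_nonneg_right _ (by positivity)
          have hcard : (Finset.Icc ⌊(n:ℝ)/lam⌋₊ ⌊lam * n⌋₊).card ≤ ⌊lam * n⌋₊ + 1 := by
            rw [Nat.card_Icc]; omega
          have hLle : ((⌊lam * (n:ℝ)⌋₊ : ℝ)) ≤ lam * n := Nat.floor_le (by positivity)
          have h1 : (1:ℝ) ≤ lam * n := by nlinarith
          calc ((Finset.Icc ⌊(n:ℝ)/lam⌋₊ ⌊lam * n⌋₊).card : ℝ)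
              ≤ (⌊lam * (n:ℝ)⌋₊ : ℝ) + 1 := by exact_mod_cast hcard
            _ ≤ lam * n + 1 := by linarith
            _ ≤ 2*lam*(n:ℝ) := by nlinarith
  calc ∑ k ∈ Finset.Icc n (2*n), norm (c k - c (k + 1))
      ≤ (C / n) * ∑ k ∈ Finset.Icc ⌊(n : ℝ) / lam⌋₊ ⌊lam * n⌋₊, norm (c k) :=
        hMVBV n hn1
    _ ≤ (C / n) * ((2*lam*(n:ℝ)) * (2*lam*δ/(n:ℝ))) :=
        mul_le_mul_of_nonneg_left hT (by positivity)
    _ = 4*C*lam^2*δ/n := by field_simp; ring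

private lemma aux_tail (c : ℤ → ℂ) (lam C : ℝ) (hlam : 2 ≤ lam) (hC : 0 < C)
    (hMVBV : ∀ n : ℕ, 1 ≤ n →
      ∑ k ∈ Finset.Icc n (2 * n), norm (c k - c (k + 1)) ≤
        (C / n) * ∑ k ∈ Finset.Icc ⌊(n : ℝ) / lam⌋₊ ⌊lam * n⌋₊, norm (c k))
    (N₀ : ℕ) (hN₀2 : 2 ≤ N₀) (δ : ℝ) (hδ : 0 < δ)
    (hN₀ : ∀ k : ℕ, N₀ ≤ k → (k:ℝ) * norm (c k) ≤ δ)
    (n : ℕ) (hn : N₀ ≤ ⌊(n:ℝ)/lam⌋₊) (m : ℕ) :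
    ∑ k ∈ Finset.Icc n m, norm (c k - c (k + 1)) ≤ 8*C*lam^2*δ/n := by
  have hlam0 : (0:ℝ) < lam := by linarith
  have hF2 : 2 ≤ ⌊(n:ℝ)/lam⌋₊ := le_trans hN₀2 hn
  have hFle : ((⌊(n:ℝ)/lam⌋₊ : ℝ)) ≤ (n:ℝ)/lam := Nat.floor_le (by positivity)
  have hfl2 : (2:ℝ) ≤ (n:ℝ)/lam := le_trans (by exact_mod_cast hF2) hFle
  have hn2lam : 2*lam ≤ (n:ℝ) := by
    have := (le_div_iff₀ hlam0).1 hfl2; linarith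
  have hn1 : 1 ≤ n := by
    by_contra h
    push_neg at h
    interval_cases n <;> simp_all <;> linarith
  have hnpos : (0:ℝ) < n := by exact_mod_cast hn1
  have hmono : ∀ j : ℕ, n ≤ j → N₀ ≤ ⌊(j:ℝ)/lam⌋₊ := by
    intro j hj
    refine le_trans hn (Nat.floor_mono ?_)
    gcongr
  have hIoc : ∀ M : ℕ, Finset.Icc n M = Finset.Ioc (n-1) M := by
    intro M; ext a; rw [Finset.mem_Icc, Finset.mem_Ioc]; omega
  have key : ∀ j : ℕ, ∑ k ∈ Finset.Icc n (2^(j+1)*n), norm (c k - c (k + 1))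
      ≤ 8*C*lam^2*δ/n - 4*C*lam^2*δ/((2^j : ℕ)*n) := by
    intro j
    induction j with
    | zero =>
      have h1 : (2:ℕ)^(0+1)*n = 2*n := by norm_num
      rw [h1]
      have := aux_block c lam C hlam hC hMVBV N₀ hN₀2 δ hδ hN₀ n hn
      calc ∑ k ∈ Finset.Icc n (2*n), norm (c k - c (k + 1))
          ≤ 4*C*lam^2*δ/n := this
        _ = 8*C*lam^2*δ/n - 4*C*lam^2*δ/((2^0 : ℕ)*n) := by norm_num; ring
    | succ j ih =>
      have hA : n ≤ 2^(j+1)*n := Nat.le_mul_of_pos_left n (by positivity)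
      have hB : 2^(j+1)*n ≤ 2^(j+2)*n := by
        apply Nat.mul_le_mul_right
        exact Nat.pow_le_pow_right (by norm_num) (by omega)
      have hsplit : ∑ k ∈ Finset.Icc n (2^(j+2)*n), norm (c k - c (k + 1))
          ≤ (∑ k ∈ Finset.Icc n (2^(j+1)*n), norm (c k - c (k + 1)))
            + ∑ k ∈ Finset.Icc (2^(j+1)*n) (2*(2^(j+1)*n)), norm (c k - c (k + 1)) := by
        rw [hIoc, hIoc, ← Finset.sum_Ioc_consecutive _ (by omega : n-1 ≤ 2^(j+1)*n)
          (by omega : 2^(j+1)*n ≤ 2^(j+2)*n)]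
        have hpow : 2^(j+2)*n = 2*(2^(j+1)*n) := by ring
        gcongr
        intro a ha; rw [Finset.mem_Ioc] at ha; rw [Finset.mem_Icc]; omega
      have hblk := aux_block c lam C hlam hC hMVBV N₀ hN₀2 δ hδ hN₀ (2^(j+1)*n)
        (hmono _ hA)
      have hcast : ((2^(j+1)*n : ℕ) : ℝ) = 2*(((2^j : ℕ):ℝ)*(n:ℝ)) := by push_cast; ring
      have h2 : (0:ℝ) < ((2^j:ℕ):ℝ)*(n:ℝ) := by positivity
      have hval : 4*C*lam^2*δ/((2^(j+1)*n : ℕ) : ℝ)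
          = (4*C*lam^2*δ/(((2^j : ℕ):ℝ)*(n:ℝ)))/2 := by
        rw [hcast, div_div]; ring_nf
      have hval2 : (((2^(j+1) : ℕ):ℝ)*(n:ℝ)) = ((2^(j+1)*n : ℕ) : ℝ) := by push_cast; ring
      calc ∑ k ∈ Finset.Icc n (2^(j+2)*n), norm (c k - c (k + 1))
          ≤ (∑ k ∈ Finset.Icc n (2^(j+1)*n), norm (c k - c (k + 1)))
            + ∑ k ∈ Finset.Icc (2^(j+1)*n) (2*(2^(j+1)*n)), norm (c k - c (k + 1)) :=
            hsplit
        _ ≤ (8*C*lam^2*δ/n - 4*C*lam^2*δ/(((2^j : ℕ):ℝ)*n)) + 4*C*lam^2*δ/((2^(j+1)*n : ℕ):ℝ) :=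
            add_le_add ih hblk
        _ ≤ 8*C*lam^2*δ/n - 4*C*lam^2*δ/(((2^(j+1) : ℕ):ℝ)*n) := by
            rw [hval2, hval]; linarith
  have hsub : Finset.Icc n m ⊆ Finset.Icc n (2^(m+1)*n) := by
    intro a ha; rw [Finset.mem_Icc] at *
    have : m < 2^m := Nat.lt_two_pow_self
    have : 2^m ≤ 2^(m+1) := Nat.pow_le_pow_right (by norm_num) (by omega)
    have : 2^(m+1) ≤ 2^(m+1)*n := Nat.le_mul_of_pos_right _ (by omega)
    omega
  calc ∑ k ∈ Finset.Icc n m, norm (c k - c (k + 1))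
      ≤ ∑ k ∈ Finset.Icc n (2^(m+1)*n), norm (c k - c (k + 1)) :=
        Finset.sum_le_sum_of_subset_of_nonneg hsub (by intros; positivity)
    _ ≤ 8*C*lam^2*δ/n - 4*C*lam^2*δ/((2^m : ℕ)*n) := key m
    _ ≤ 8*C*lam^2*δ/n := by
        have : (0:ℝ) ≤ 4*C*lam^2*δ/(((2^m : ℕ):ℝ)*n) := by positivity
        linarith

private lemma aux_est (c : ℤ → ℂ) (lam C : ℝ) (hlam : 2 ≤ lam) (hC : 0 < C)
    (hMVBV : ∀ n : ℕ, 1 ≤ n →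
      ∑ k ∈ Finset.Icc n (2 * n), norm (c k - c (k + 1)) ≤
        (C / n) * ∑ k ∈ Finset.Icc ⌊(n : ℝ) / lam⌋₊ ⌊lam * n⌋₊, norm (c k))
    (N₀ : ℕ) (hN₀2 : 2 ≤ N₀) (δ : ℝ) (hδ : 0 < δ)
    (hN₀ : ∀ k : ℕ, N₀ ≤ k → (k:ℝ) * norm (c k) ≤ δ)
    (n m : ℕ) (hfl : N₀ ≤ ⌊(n:ℝ)/lam⌋₊) (hnN : N₀ ≤ n)
    (y : ℝ) (hy0 : 0 < y) (hyπ : y ≤ Real.pi) :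
    norm (∑ k ∈ Finset.Ioc n m, c k * (Real.sin (k*y) : ℂ))
      ≤ (2*Real.pi + 8*C*lam^2 + 1) * δ := by
  have hπ : (0:ℝ) < Real.pi := Real.pi_pos
  have hlam0 : (0:ℝ) < lam := by linarith
  set P : ℕ := ⌈Real.pi/y⌉₊ with hP
  set N₁ : ℕ := max n P with hN₁
  have hπy1 : 1 ≤ Real.pi/y := (le_div_iff₀ hy0).2 (by linarith)
  have hPge : Real.pi/y ≤ (P:ℝ) := Nat.le_ceil _
  have hPle : (P:ℝ) ≤ Real.pi/y + 1 := (Nat.ceil_lt_add_one (by positivity)).le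
  have hsinhalf : y/Real.pi ≤ Real.sin (y/2) := by
    have := Real.mul_le_sin (x := y/2) (by positivity) (by linarith)
    calc y/Real.pi = 2/Real.pi * (y/2) := by ring
      _ ≤ Real.sin (y/2) := this
  have hsinpos : 0 < Real.sin (y/2) := lt_of_lt_of_le (by positivity) hsinhalf
  have hdb : 1/Real.sin (y/2) ≤ Real.pi/y := by
    have h1 := one_div_le_one_div_of_le (by positivity : (0:ℝ) < y/Real.pi) hsinhalf
    rwa [one_div_div] at h1
  -- part A : short sums bounded by 2πδ
  have hA : ∀ m' : ℕ, m' ≤ N₁ →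
      norm (∑ k ∈ Finset.Ioc n m', c k * (Real.sin (k*y) : ℂ)) ≤ 2*Real.pi*δ := by
    intro m' hm'
    calc norm (∑ k ∈ Finset.Ioc n m', c k * (Real.sin (k*y) : ℂ))
        ≤ ∑ k ∈ Finset.Ioc n m', norm (c k * (Real.sin (k*y) : ℂ)) :=
          norm_sum_le _ _
      _ ≤ ∑ _k ∈ Finset.Ioc n m', δ*y := by
          apply Finset.sum_le_sum
          intro k hk
          rw [Finset.mem_Ioc] at hk
          have hk0 : (0:ℝ) < k := by
            have : 1 ≤ k := by omega
            exact_mod_cast this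
          have h1 : norm (c k) ≤ δ / k := by
            rw [le_div_iff₀ hk0, mul_comm]
            exact hN₀ k (by omega)
          have h2 : |Real.sin ((k:ℝ)*y)| ≤ (k:ℝ)*y := by
            have := Real.abs_sin_le_abs (x := (k:ℝ)*y)
            rwa [abs_of_nonneg (mul_nonneg (Nat.cast_nonneg k) hy0.le)] at this
          calc norm (c k * (Real.sin ((k:ℝ)*y) : ℂ))
              = norm (c k) * |Real.sin ((k:ℝ)*y)| := by
                rw [norm_mul, Complex.norm_real, Real.norm_eq_abs]
            _ ≤ (δ/k) * ((k:ℝ)*y) := by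
                apply mul_le_mul h1 h2 (abs_nonneg _) (by positivity)
            _ = δ*y := by field_simp
      _ = ((Finset.Ioc n m').card : ℝ) * (δ*y) := by
          rw [Finset.sum_const, nsmul_eq_mul]
      _ ≤ (P:ℝ) * (δ*y) := by
          apply mul_le_mul_of_nonneg_right _ (by positivity)
          have : (Finset.Ioc n m').card = m' - n := Nat.card_Ioc n m'
          have h2 : m' - n ≤ P := by omega
          calc ((Finset.Ioc n m').card : ℝ) = ((m' - n : ℕ) : ℝ) := by rw [this]
            _ ≤ (P:ℝ) := by exact_mod_cast h2
      _ ≤ (Real.pi/y + 1) * (δ*y) := by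
          apply mul_le_mul_of_nonneg_right hPle (by positivity)
      _ = δ*(Real.pi + y) := by field_simp
      _ ≤ 2*Real.pi*δ := by nlinarith
  rcases le_or_gt m N₁ with hm | hm
  · calc norm (∑ k ∈ Finset.Ioc n m, c k * (Real.sin (k*y) : ℂ))
        ≤ 2*Real.pi*δ := hA m hm
      _ ≤ (2*Real.pi + 8*C*lam^2 + 1) * δ := by
          nlinarith [mul_nonneg (mul_nonneg (mul_nonneg (by norm_num : (0:ℝ) ≤ 8) hC.le) (sq_nonneg lam)) hδ.le]
  · -- split
    have hnN₁ : n ≤ N₁ := le_max_left _ _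
    have hsplit : ∑ k ∈ Finset.Ioc n m, c k * (Real.sin (k*y) : ℂ)
        = (∑ k ∈ Finset.Ioc n N₁, c k * (Real.sin (k*y) : ℂ))
          + ∑ k ∈ Finset.Ioc N₁ m, c k * (Real.sin (k*y) : ℂ) :=
      (Finset.sum_Ioc_consecutive _ hnN₁ hm.le).symm
    -- part B
    have hs : (0:ℝ) < (N₁:ℝ) + 1 := by positivity
    have hπs : Real.pi/y ≤ (N₁:ℝ) + 1 := by
      have : (P:ℝ) ≤ (N₁:ℝ) := by exact_mod_cast le_max_right n P
      linarith
    have habel := aux_abel (fun k => c k) (fun k => (Real.sin (k*y) : ℂ)) N₁ m hm.le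
    have hSb : ∀ k : ℕ, norm (∑ j ∈ Finset.Ioc N₁ k, (Real.sin ((j:ℝ)*y) : ℂ))
        ≤ Real.pi/y := by
      intro k
      have : (∑ j ∈ Finset.Ioc N₁ k, (Real.sin ((j:ℝ)*y) : ℂ))
          = ((∑ j ∈ Finset.Ioc N₁ k, Real.sin ((j:ℝ)*y) : ℝ) : ℂ) := by
        push_cast
        rfl
      rw [this, Complex.norm_real, Real.norm_eq_abs]
      exact le_trans (aux_dirichlet_bound hsinpos N₁ k) hdb
    have htail : ∑ k ∈ Finset.Ioc N₁ m, norm (c k - c (k+1))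
        ≤ 8*C*lam^2*δ/((N₁:ℝ)+1) := by
      have h1 : Finset.Ioc N₁ m = Finset.Icc (N₁+1) m := by
        ext a; rw [Finset.mem_Ioc, Finset.mem_Icc]; omega
      have h2 : N₀ ≤ ⌊((N₁+1 : ℕ):ℝ)/lam⌋₊ := by
        refine le_trans hfl (Nat.floor_mono ?_)
        have hnn : (n:ℝ) ≤ ((N₁+1:ℕ):ℝ) := by exact_mod_cast (by omega : n ≤ N₁+1)
        gcongr
      have h3 := aux_tail c lam C hlam hC hMVBV N₀ hN₀2 δ hδ hN₀ (N₁+1) h2 m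
      rw [h1]
      calc ∑ k ∈ Finset.Icc (N₁+1) m, norm (c k - c (k+1))
          = ∑ k ∈ Finset.Icc (N₁+1) m, norm (c k - c ((k:ℤ)+1)) := by
            apply Finset.sum_congr rfl; intro k _; norm_num
        _ ≤ 8*C*lam^2*δ/((N₁+1 : ℕ):ℝ) := h3
        _ = 8*C*lam^2*δ/((N₁:ℝ)+1) := by push_cast; ring_nf
    have hcm : norm (c ((m+1 : ℕ) : ℤ)) ≤ δ/((N₁:ℝ)+1) := by
      have hm1 : (0:ℝ) < ((m+1:ℕ):ℝ) := by positivity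
      have h1 : norm (c ((m+1:ℕ):ℤ)) ≤ δ/((m+1:ℕ):ℝ) := by
        rw [le_div_iff₀ hm1, mul_comm]
        exact hN₀ (m+1) (by omega)
      have h2 : δ/((m+1:ℕ):ℝ) ≤ δ/((N₁:ℝ)+1) := by
        apply div_le_div_of_nonneg_left hδ.le hs
        push_cast; have : N₁ < m := hm; exact_mod_cast by omega
      linarith
    have hB : norm (∑ k ∈ Finset.Ioc N₁ m, c k * (Real.sin (k*y) : ℂ))
        ≤ (8*C*lam^2 + 1) * δ := by
      rw [habel]
      calc norm ((∑ k ∈ Finset.Ioc N₁ m, (c k - c (↑(k+1))) * (∑ j ∈ Finset.Ioc N₁ k, (Real.sin ((j:ℝ)*y) : ℂ)))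
              + c (↑(m+1)) * ∑ j ∈ Finset.Ioc N₁ m, (Real.sin ((j:ℝ)*y) : ℂ))
          ≤ norm (∑ k ∈ Finset.Ioc N₁ m, (c k - c (↑(k+1))) * (∑ j ∈ Finset.Ioc N₁ k, (Real.sin ((j:ℝ)*y) : ℂ)))
            + norm (c (↑(m+1)) * ∑ j ∈ Finset.Ioc N₁ m, (Real.sin ((j:ℝ)*y) : ℂ)) :=
            norm_add_le _ _
        _ ≤ (∑ k ∈ Finset.Ioc N₁ m, norm (c k - c (↑(k+1))) * (Real.pi/y))
            + norm (c (↑(m+1))) * (Real.pi/y) := by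
            apply add_le_add
            · calc norm (∑ k ∈ Finset.Ioc N₁ m, (c k - c (↑(k+1))) * (∑ j ∈ Finset.Ioc N₁ k, (Real.sin ((j:ℝ)*y) : ℂ)))
                  ≤ ∑ k ∈ Finset.Ioc N₁ m, norm ((c k - c (↑(k+1))) * (∑ j ∈ Finset.Ioc N₁ k, (Real.sin ((j:ℝ)*y) : ℂ))) :=
                    norm_sum_le _ _
                _ ≤ ∑ k ∈ Finset.Ioc N₁ m, norm (c k - c (↑(k+1))) * (Real.pi/y) := by
                    apply Finset.sum_le_sum
                    intro k _
                    rw [norm_mul]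
                    exact mul_le_mul_of_nonneg_left (hSb k) (norm_nonneg _)
            · rw [norm_mul]
              exact mul_le_mul_of_nonneg_left (hSb m) (norm_nonneg _)
        _ = ((∑ k ∈ Finset.Ioc N₁ m, norm (c k - c (↑(k+1))))
            + norm (c (↑(m+1)))) * (Real.pi/y) := by
            rw [← Finset.sum_mul]; ring
        _ ≤ ((8*C*lam^2*δ/((N₁:ℝ)+1)) + δ/((N₁:ℝ)+1)) * (Real.pi/y) := by
            apply mul_le_mul_of_nonneg_right _ (by positivity)
            apply add_le_add _ hcm
            calc ∑ k ∈ Finset.Ioc N₁ m, norm (c k - c (↑(k+1)))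
                = ∑ k ∈ Finset.Ioc N₁ m, norm (c k - c ((k:ℤ)+1)) := by
                  apply Finset.sum_congr rfl; intro k _; norm_num
              _ ≤ 8*C*lam^2*δ/((N₁:ℝ)+1) := by
                  have h1 : Finset.Ioc N₁ m = Finset.Icc (N₁+1) m := by
                    ext a; rw [Finset.mem_Ioc, Finset.mem_Icc]; omega
                  rw [h1] at htail ⊢
                  calc ∑ k ∈ Finset.Icc (N₁+1) m, norm (c k - c ((k:ℤ)+1))
                      = ∑ k ∈ Finset.Icc (N₁+1) m, norm (c k - c (k+1)) := by
                        apply Finset.sum_congr rfl; intro k _; norm_num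
                    _ ≤ 8*C*lam^2*δ/((N₁:ℝ)+1) := htail
        _ ≤ ((8*C*lam^2*δ/((N₁:ℝ)+1)) + δ/((N₁:ℝ)+1)) * ((N₁:ℝ)+1) := by
            apply mul_le_mul_of_nonneg_left hπs
            positivity
        _ = (8*C*lam^2 + 1) * δ := by field_simp
    calc norm (∑ k ∈ Finset.Ioc n m, c k * (Real.sin (k*y) : ℂ))
        ≤ norm (∑ k ∈ Finset.Ioc n N₁, c k * (Real.sin (k*y) : ℂ))
          + norm (∑ k ∈ Finset.Ioc N₁ m, c k * (Real.sin (k*y) : ℂ)) := by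
          rw [hsplit]; exact norm_add_le _ _
      _ ≤ 2*Real.pi*δ + (8*C*lam^2 + 1) * δ := add_le_add (hA N₁ le_rfl) hB
      _ = (2*Real.pi + 8*C*lam^2 + 1) * δ := by ring

private lemma aux_core (c : ℤ → ℂ) (lam C : ℝ) (hlam : 2 ≤ lam) (hC : 0 < C)
    (hMVBV : ∀ n : ℕ, 1 ≤ n →
      ∑ k ∈ Finset.Icc n (2 * n), norm (c k - c (k + 1)) ≤
        (C / n) * ∑ k ∈ Finset.Icc ⌊(n : ℝ) / lam⌋₊ ⌊lam * n⌋₊, norm (c k))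
    (hlim : Tendsto (fun n : ℕ => (n : ℂ) * c n) atTop (nhds 0))
    (δ : ℝ) (hδ : 0 < δ) :
    ∃ M : ℕ, ∀ n m : ℕ, M ≤ n → ∀ x : ℝ,
      norm (∑ k ∈ Finset.Ioc n m, c k * (Real.sin (k*x) : ℂ))
        ≤ (2*Real.pi + 8*C*lam^2 + 1) * δ := by
  have hπ : (0:ℝ) < Real.pi := Real.pi_pos
  have hlam0 : (0:ℝ) < lam := by linarith
  have hKpos : (0:ℝ) < (2*Real.pi + 8*C*lam^2 + 1) * δ := by
    have h8 : (0:ℝ) ≤ 8*C*lam^2 := by positivity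
    nlinarith
  -- extract N₀ from the limit hypothesis
  have h1 : ∀ᶠ k : ℕ in atTop, ‖(k:ℂ) * c k‖ < δ := by
    have h0 : Tendsto (fun k : ℕ => ‖(k:ℂ) * c k‖) atTop (nhds 0) := by
      simpa using hlim.norm
    exact h0.eventually_lt_const hδ
  obtain ⟨N₀', hN₀'⟩ := Filter.eventually_atTop.1 h1
  set N₀ : ℕ := max N₀' 2 with hN₀def
  have hN₀2 : 2 ≤ N₀ := le_max_right _ _
  have hN₀ : ∀ k : ℕ, N₀ ≤ k → (k:ℝ) * norm (c k) ≤ δ := by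
    intro k hk
    have := (hN₀' k (le_trans (le_max_left _ _) hk)).le
    rwa [norm_mul, Complex.norm_natCast] at this
  set M : ℕ := ⌈lam * ((N₀:ℝ) + 2)⌉₊ with hMdef
  refine ⟨M, ?_⟩
  intro n m hMn x
  have hnM : (lam * ((N₀:ℝ) + 2)) ≤ (n:ℝ) :=
    le_trans (Nat.le_ceil _) (Nat.cast_le.2 hMn)
  have hfl : N₀ ≤ ⌊(n:ℝ)/lam⌋₊ := by
    apply Nat.le_floor
    rw [le_div_iff₀ hlam0]
    nlinarith
  have hnN : N₀ ≤ n := by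
    have : ((N₀:ℝ)) ≤ (n:ℝ) := by nlinarith
    exact_mod_cast this
  -- reduce x modulo 2π
  set z : ℤ := round (x / (2*Real.pi)) with hz
  set y : ℝ := x - z*(2*Real.pi) with hy
  have hsin : ∀ k : ℕ, Real.sin (k*x) = Real.sin (k*y) := by
    intro k
    have : (k:ℝ)*x = (k:ℝ)*y + ((k:ℤ)*z : ℤ)*(2*Real.pi) := by
      rw [hy]; push_cast; ring
    rw [this, Real.sin_add_int_mul_two_pi]
  have hyabs : |y| ≤ Real.pi := by
    have h := abs_sub_round (x/(2*Real.pi))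
    have hy' : y = (x/(2*Real.pi) - (round (x/(2*Real.pi)) : ℤ)) * (2*Real.pi) := by
      rw [hy, hz]; field_simp
    rw [hy', abs_mul, abs_of_pos (show (0:ℝ) < 2*Real.pi by positivity)]
    nlinarith [h, abs_nonneg (x/(2*Real.pi) - (round (x/(2*Real.pi)) : ℤ))]
  have hrw : ∑ k ∈ Finset.Ioc n m, c k * (Real.sin (k*x) : ℂ)
      = ∑ k ∈ Finset.Ioc n m, c k * (Real.sin (k*y) : ℂ) := by
    apply Finset.sum_congr rfl
    intro k _
    rw [hsin k]
  rw [hrw]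
  rcases lt_trichotomy y 0 with hy0 | hy0 | hy0
  · have hneg : ∑ k ∈ Finset.Ioc n m, c k * (Real.sin (k*y) : ℂ)
        = - ∑ k ∈ Finset.Ioc n m, c k * (Real.sin (k*(-y)) : ℂ) := by
      rw [← Finset.sum_neg_distrib]
      apply Finset.sum_congr rfl
      intro k _
      rw [mul_neg, Real.sin_neg]
      push_cast
      ring
    rw [hneg, norm_neg]
    exact aux_est c lam C hlam hC hMVBV N₀ hN₀2 δ hδ hN₀ n m hfl hnN (-y)
      (by linarith) (by rw [abs_of_nonpos hy0.le] at hyabs; linarith)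
  · have : ∀ k ∈ Finset.Ioc n m, c k * (Real.sin (k*y) : ℂ) = 0 := by
      intro k _
      rw [hy0]
      simp
    rw [Finset.sum_congr rfl this]
    simpa using hKpos.le
  · exact aux_est c lam C hlam hC hMVBV N₀ hN₀2 δ hδ hN₀ n m hfl hnN y hy0
      (by rwa [abs_of_pos hy0] at hyabs)

private lemma aux_insert (n : ℕ) :
    Finset.Icc (-(↑(n+1) : ℤ)) (↑(n+1) : ℤ)
      = insert (-(↑(n+1) : ℤ)) (insert ((↑(n+1) : ℤ)) (Finset.Icc (-(n:ℤ)) (n:ℤ))) := by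
  ext k
  simp only [Finset.mem_Icc, Finset.mem_insert]
  omega

private lemma aux_sps_eq (c : ℤ → ℂ) (n : ℕ) (x : ℝ) :
    symPartialSum c n x = c 0 + ∑ k ∈ Finset.Ioc 0 n,
      (c (k:ℤ) * Complex.exp ((k:ℂ) * x * Complex.I)
        + c (-(k:ℤ)) * Complex.exp (-(k:ℂ) * x * Complex.I)) := by
  induction n with
  | zero => simp [symPartialSum]
  | succ n ih =>
    have h1 : symPartialSum c (n+1) x = symPartialSum c n x
        + (c ((n+1:ℕ):ℤ) * Complex.exp (((n+1:ℕ):ℂ) * x * Complex.I)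
          + c (-((n+1:ℕ):ℤ)) * Complex.exp (-((n+1:ℕ):ℂ) * x * Complex.I)) := by
      unfold symPartialSum
      rw [aux_insert n, Finset.sum_insert (by
          simp only [Finset.mem_insert, Finset.mem_Icc]
          push_cast; omega),
        Finset.sum_insert (by simp only [Finset.mem_Icc]; push_cast; omega)]
      push_cast
      ring
    rw [h1, ih, Finset.sum_Ioc_succ_top (Nat.zero_le _)]
    push_cast
    ring
private lemma aux_sps_diff (c : ℤ → ℂ) (n m : ℕ) (h : n ≤ m) (x : ℝ) :
    symPartialSum c m x - symPartialSum c n x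
      = ∑ k ∈ Finset.Ioc n m,
        (c (k:ℤ) * Complex.exp ((k:ℂ) * x * Complex.I)
          + c (-(k:ℤ)) * Complex.exp (-(k:ℂ) * x * Complex.I)) := by
  rw [aux_sps_eq, aux_sps_eq, ← Finset.sum_Ioc_consecutive _ (Nat.zero_le n) h]
  ring

private lemma aux_pair (a b : ℂ) (t : ℝ) :
    a * Complex.exp ((t:ℂ) * Complex.I) + b * Complex.exp (-(t:ℂ) * Complex.I)
      = (a + b) * Complex.exp (-(t:ℂ) * Complex.I)
        + Complex.I * (2 * (a * (Real.sin t : ℂ))) := by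
  have h1 : Complex.exp ((t:ℂ) * Complex.I) = Complex.cos t + Complex.sin t * Complex.I :=
    Complex.exp_mul_I _
  have h2 : Complex.exp (-(t:ℂ) * Complex.I)
      = Complex.cos t - Complex.sin t * Complex.I := by
    rw [Complex.exp_mul_I, Complex.cos_neg, Complex.sin_neg]
    ring
  rw [h1, h2, Complex.ofReal_sin]
  ring

end Aux

/-- Sufficiency part of the complex-space theorem: under the sector condition,
the mean value bounded variation condition on `|c_k|`, `n·cₙ → 0` and
`∑ |cₙ + c₋ₙ| < ∞`, the symmetric partial sums converge uniformly on ℝ to a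
continuous 2π-periodic sum function. -/
theorem stmt10 (θ₀ : ℝ) (hθ₀ : 0 ≤ θ₀) (hθ₁ : θ₀ < Real.pi / 2)
    (c : ℤ → ℂ)
    (hsector : ∀ n : ℕ, 1 ≤ n →
      |Complex.arg (c n)| ≤ θ₀ ∧ |Complex.arg (c n + c (-(n : ℤ)))| ≤ θ₀)
    (lam : ℝ) (hlam : 2 ≤ lam) (C : ℝ) (hC : 0 < C)
    (hMVBV : ∀ n : ℕ, 1 ≤ n →
      ∑ k ∈ Finset.Icc n (2 * n), ‖c k - c (k + 1)‖ ≤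
        (C / n) * ∑ k ∈ Finset.Icc ⌊(n : ℝ) / lam⌋₊ ⌊lam * n⌋₊, ‖c k‖)
    (hlim : Tendsto (fun n : ℕ => (n : ℂ) * c n) atTop (nhds 0))
    (hsum : Summable fun n : ℕ => ‖c n + c (-(n : ℤ))‖) :
    ∃ f : ℝ → ℂ, Continuous f ∧ Function.Periodic f (2 * Real.pi) ∧
      TendstoUniformly (fun (n : ℕ) (x : ℝ) => symPartialSum c n x) f atTop := by
  have hπ : (0:ℝ) < Real.pi := Real.pi_pos
  have h8C : (0:ℝ) ≤ 8*C*lam^2 :=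
    mul_nonneg (mul_nonneg (by norm_num) hC.le) (sq_nonneg lam)
  have hK : (0:ℝ) < 2*Real.pi + 8*C*lam^2 + 1 := by linarith
  -- uniform Cauchy criterion
  have hucs : ∀ ε : ℝ, 0 < ε → ∃ N : ℕ, ∀ m, N ≤ m → ∀ n, N ≤ n → ∀ x : ℝ,
      dist (symPartialSum c m x) (symPartialSum c n x) < ε := by
    intro ε hε
    set δ : ℝ := ε / (8*(2*Real.pi + 8*C*lam^2 + 1)) with hδdef
    have hδ : 0 < δ := by positivity
    have hKδ : (2*Real.pi + 8*C*lam^2 + 1) * δ = ε/8 := by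
      rw [hδdef]; field_simp
    obtain ⟨M₁, hM₁⟩ := aux_core c lam C hlam hC hMVBV hlim δ hδ
    -- tail control for the absolutely convergent part
    have hcs : CauchySeq (fun t : ℕ =>
        ∑ k ∈ Finset.range t, norm (c k + c (-(k:ℤ)))) :=
      hsum.hasSum.tendsto_sum_nat.cauchySeq
    rw [Metric.cauchySeq_iff] at hcs
    obtain ⟨N₂, hN₂⟩ := hcs (ε/4) (by positivity)
    have hP1 : ∀ n m : ℕ, N₂ ≤ n → n ≤ m →
        ∑ k ∈ Finset.Ioc n m, norm (c k + c (-(k:ℤ))) < ε/4 := by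
      intro n m hn hnm
      have e0 : Finset.Ioc n m = Finset.Ico (n+1) (m+1) := by
        ext a; rw [Finset.mem_Ioc, Finset.mem_Ico]; omega
      have e1 := Finset.sum_Ico_consecutive
        (fun k : ℕ => norm (c k + c (-(k:ℤ))))
        (show 0 ≤ n+1 by omega) (show n+1 ≤ m+1 by omega)
      rw [← Finset.range_eq_Ico, ← Finset.range_eq_Ico] at e1
      have e2 : ∑ k ∈ Finset.Ioc n m, norm (c k + c (-(k:ℤ)))
          = (∑ k ∈ Finset.range (m+1), norm (c k + c (-(k:ℤ))))
            - ∑ k ∈ Finset.range (n+1), norm (c k + c (-(k:ℤ))) := by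
        rw [e0, ← e1]; ring
      have hd := hN₂ (m+1) (by omega) (n+1) (by omega)
      rw [Real.dist_eq] at hd
      calc ∑ k ∈ Finset.Ioc n m, norm (c k + c (-(k:ℤ)))
          = _ - _ := e2
        _ ≤ |(∑ k ∈ Finset.range (m+1), norm (c k + c (-(k:ℤ))))
            - ∑ k ∈ Finset.range (n+1), norm (c k + c (-(k:ℤ)))| := le_abs_self _
        _ < ε/4 := hd
    refine ⟨max M₁ N₂, ?_⟩
    suffices h : ∀ m n : ℕ, n ≤ m → max M₁ N₂ ≤ n → ∀ x : ℝ,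
        dist (symPartialSum c m x) (symPartialSum c n x) < ε by
      intro m hm n hn x
      rcases le_total n m with h1 | h1
      · exact h m n h1 hn x
      · rw [dist_comm]; exact h n m h1 hm x
    intro m n hnm hn x
    rw [dist_eq_norm, aux_sps_diff c n m hnm x]
    have hpair : ∀ k ∈ Finset.Ioc n m,
        c (k:ℤ) * Complex.exp ((k:ℂ) * x * Complex.I)
          + c (-(k:ℤ)) * Complex.exp (-(k:ℂ) * x * Complex.I)
        = (c (k:ℤ) + c (-(k:ℤ))) * Complex.exp (-(k:ℂ) * x * Complex.I)
          + Complex.I * (2 * (c (k:ℤ) * (Real.sin (k*x) : ℂ))) := by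
      intro k _
      have h := aux_pair (c (k:ℤ)) (c (-(k:ℤ))) ((k:ℝ)*x)
      push_cast at h ⊢
      convert h using 2 <;> ring_nf
    rw [Finset.sum_congr rfl hpair, Finset.sum_add_distrib]
    have hb1 : norm (∑ k ∈ Finset.Ioc n m,
        (c (k:ℤ) + c (-(k:ℤ))) * Complex.exp (-(k:ℂ) * x * Complex.I))
        ≤ ∑ k ∈ Finset.Ioc n m, norm (c k + c (-(k:ℤ))) := by
      refine le_trans (norm_sum_le _ _) ?_
      apply Finset.sum_le_sum
      intro k _
      rw [norm_mul]
      have he : norm (Complex.exp (-(k:ℂ) * x * Complex.I)) = 1 := by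
        have h := Complex.norm_exp_ofReal_mul_I (-((k:ℝ)*x))
        have h2 : ((-((k:ℝ)*x) : ℝ) : ℂ) * Complex.I = -(k:ℂ) * x * Complex.I := by
          push_cast; ring
        rwa [h2] at h
      rw [he, mul_one]
    have hb2 : norm (∑ k ∈ Finset.Ioc n m,
        Complex.I * (2 * (c (k:ℤ) * (Real.sin (k*x) : ℂ))))
        = 2 * norm (∑ k ∈ Finset.Ioc n m, c (k:ℤ) * (Real.sin (k*x) : ℂ)) := by
      have e1 : ∑ k ∈ Finset.Ioc n m, Complex.I * (2 * (c (k:ℤ) * (Real.sin (k*x) : ℂ)))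
          = (Complex.I * 2) * ∑ k ∈ Finset.Ioc n m, c (k:ℤ) * (Real.sin (k*x) : ℂ) := by
        rw [Finset.mul_sum]
        apply Finset.sum_congr rfl
        intros; ring
      rw [e1, norm_mul]
      simp
    have hM1n : M₁ ≤ n := le_trans (le_max_left _ _) hn
    have hN2n : N₂ ≤ n := le_trans (le_max_right _ _) hn
    calc norm ((∑ k ∈ Finset.Ioc n m,
            (c (k:ℤ) + c (-(k:ℤ))) * Complex.exp (-(k:ℂ) * x * Complex.I))
          + ∑ k ∈ Finset.Ioc n m, Complex.I * (2 * (c (k:ℤ) * (Real.sin (k*x) : ℂ))))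
        ≤ norm (∑ k ∈ Finset.Ioc n m,
            (c (k:ℤ) + c (-(k:ℤ))) * Complex.exp (-(k:ℂ) * x * Complex.I))
          + norm (∑ k ∈ Finset.Ioc n m,
            Complex.I * (2 * (c (k:ℤ) * (Real.sin (k*x) : ℂ)))) := norm_add_le _ _
      _ ≤ (∑ k ∈ Finset.Ioc n m, norm (c k + c (-(k:ℤ))))
          + 2 * norm (∑ k ∈ Finset.Ioc n m, c (k:ℤ) * (Real.sin (k*x) : ℂ)) := by
          rw [hb2]; exact add_le_add_left hb1 _
      _ < ε/4 + 2 * (ε/8) := by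
          apply add_lt_add_of_lt_of_le (hP1 n m hN2n hnm)
          have := hM₁ n m hM1n x
          rw [hKδ] at this
          linarith
      _ < ε := by linarith
  -- pointwise limits
  have hpt : ∀ x : ℝ, ∃ l : ℂ, Tendsto (fun n => symPartialSum c n x) atTop (nhds l) := by
    intro x
    apply cauchySeq_tendsto_of_complete
    rw [Metric.cauchySeq_iff]
    intro ε hε
    obtain ⟨N, hN⟩ := hucs ε hε
    exact ⟨N, fun m hm n hn => hN m hm n hn x⟩
  choose f hf using hpt
  have huc : UniformCauchySeqOn (fun (n : ℕ) (x : ℝ) => symPartialSum c n x)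
      atTop Set.univ := by
    rw [Metric.uniformCauchySeqOn_iff]
    intro ε hε
    obtain ⟨N, hN⟩ := hucs ε hε
    exact ⟨N, fun m hm n hn x _ => hN m hm n hn x⟩
  have htu : TendstoUniformly (fun (n : ℕ) (x : ℝ) => symPartialSum c n x) f atTop := by
    rw [← tendstoUniformlyOn_univ]
    exact huc.tendstoUniformlyOn_of_tendsto (fun x _ => hf x)
  have hcont : ∀ n : ℕ, Continuous (fun x : ℝ => symPartialSum c n x) := by
    intro n
    unfold symPartialSum
    apply continuous_finset_sum
    intro k _
    exact continuous_const.mul (Complex.continuous_exp.comp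
      ((continuous_const.mul Complex.continuous_ofReal).mul continuous_const))
  have hper : ∀ n : ℕ, ∀ x : ℝ, symPartialSum c n (x + 2*Real.pi) = symPartialSum c n x := by
    intro n x
    unfold symPartialSum
    apply Finset.sum_congr rfl
    intro k _
    congr 1
    rw [show ((k:ℂ)) * ((x + 2*Real.pi : ℝ) : ℂ) * Complex.I
        = (k:ℂ) * (x:ℂ) * Complex.I + (k:ℂ) * (2 * (Real.pi:ℂ) * Complex.I) by
        push_cast; ring,
      Complex.exp_add, Complex.exp_int_mul_two_pi_mul_I, mul_one]
  refine ⟨f, htu.continuous (Filter.Eventually.of_forall hcont).frequently, ?_, htu⟩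
  intro x
  have h2 : (fun n : ℕ => symPartialSum c n (x + 2*Real.pi))
      = fun n : ℕ => symPartialSum c n x := funext fun n => hper n x
  exact tendsto_nhds_unique (h2 ▸ hf (x + 2*Real.pi)) (hf x)
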